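/- Lower bound by expansion: for any p ≥ 1, any graph G = (V,E) (edges as ordered pairs), and any nonempty I, J ⊆ V, N_{ε,p}(G) ≥ c · min{p, |E ∩ (I×J)|} / √(|I||J|) for a universal constant c > 0. -/

import Mathlib

open MeasureTheory ProbabilityTheory
open scoped Classical

lemma my_integrable_of_bdd {Ω : Type} [MeasureSpace Ω] [IsProbabilityMeasure (ℙ : Measure Ω)]
    {f : Ω → ℝ} (hm : Measurable f) (C : ℝ) (h : ∀ ω, |f ω| ≤ C) :
    Integrable f ℙ :=
  ⟨hm.aestronglyMeasurable, HasFiniteIntegral.of_bounded (C := C)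
    (Filter.Eventually.of_forall (by simpa [Real.norm_eq_abs] using h))⟩

lemma my_int_eps_zero {Ω : Type} [MeasureSpace Ω] [IsProbabilityMeasure (ℙ : Measure Ω)]
    {f : Ω → ℝ} (hm : Measurable f) (hv : ∀ ω, f ω = 1 ∨ f ω = -1)
    (hh : ℙ {ω | f ω = 1} = 1/2) : ∫ ω, f ω = 0 := by
  have hA : MeasurableSet {ω | f ω = 1} := hm (measurableSet_singleton 1)
  have hf : f = fun ω => 2 * Set.indicator {ω | f ω = 1} (fun _ => (1:ℝ)) ω - 1 := by
    funext ω
    rcases hv ω with h1 | h1 <;> simp [h1, Set.indicator_apply] <;> norm_num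
  rw [hf]
  rw [integral_sub (((integrable_const (1:ℝ)).indicator hA).const_mul 2) (integrable_const 1)]
  rw [integral_const_mul, integral_indicator_const _ hA, integral_const]
  norm_num [measureReal_def, hh, ENNReal.toReal_div]

/-- The `L_p` Rademacher norm `N_{ε,p}(G)` of a graph `G`, with respect to a family `ε`
of random signs indexed by ordered pairs of vertices. -/
noncomputable def graphRadNorm {V : Type*} [Fintype V] {Ω : Type*} [MeasureSpace Ω]
    (G : SimpleGraph V) (ε : V × V → Ω → ℝ) (p : ℝ) : ℝ :=
  sSup {x | ∃ s t : V → ℝ, ∑ v, s v ^ 2 ≤ 1 ∧ ∑ v, t v ^ 2 ≤ 1 ∧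
    x = (∫ ω, |∑ i, ∑ j, if G.Adj i j then ε (i, j) ω * s i * t j else 0| ^ p) ^ (1 / p)}

theorem stmt15 :
    ∃ c : ℝ, 0 < c ∧
      ∀ (V : Type) [Fintype V] (G : SimpleGraph V)
        (Ω : Type) [MeasureSpace Ω] [IsProbabilityMeasure (ℙ : Measure Ω)]
        (ε : V × V → Ω → ℝ),
        (∀ q, Measurable (ε q)) →
        iIndepFun ε ℙ →
        (∀ q ω, ε q ω = 1 ∨ ε q ω = -1) →
        (∀ q, ℙ {ω | ε q ω = 1} = 1 / 2) →
        ∀ p : ℝ, 1 ≤ p →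
        ∀ I J : Finset V, I.Nonempty → J.Nonempty →
          c * min p (((I ×ˢ J).filter fun e => G.Adj e.1 e.2).card : ℝ) /
              Real.sqrt (I.card * J.card) ≤
            graphRadNorm G ε p := by
  refine ⟨1/4, by norm_num, ?_⟩
  intro V _ G Ω _ _ ε hmeas hind hpm hhalf p hp I J hI hJ
  have hp0 : (0:ℝ) < p := lt_of_lt_of_le one_pos hp
  have hp0' : p ≠ 0 := ne_of_gt hp0
  set F : Finset (V × V) := (I ×ˢ J).filter (fun e => G.Adj e.1 e.2) with hFdef
  set m : ℕ := F.card with hmdef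
  set D : ℝ := Real.sqrt ((I.card : ℝ) * (J.card : ℝ)) with hDdef
  have hD : 0 < D := Real.sqrt_pos.mpr
    (mul_pos (by exact_mod_cast hI.card_pos) (by exact_mod_cast hJ.card_pos))
  -- the set whose sSup we bound
  set SS : Set ℝ := {x | ∃ s t : V → ℝ, ∑ v, s v ^ 2 ≤ 1 ∧ ∑ v, t v ^ 2 ≤ 1 ∧
    x = (∫ ω, |∑ i, ∑ j, if G.Adj i j then ε (i, j) ω * s i * t j else 0| ^ p) ^ (1 / p)}
    with hSSdef
  have hnorm : graphRadNorm G ε p = sSup SS := rfl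
  have heps_abs : ∀ q ω, |ε q ω| ≤ 1 := by
    intro q ω; rcases hpm q ω with h | h <;> simp [h]
  -- measurability of the double sums
  have hTmeas : ∀ s t : V → ℝ,
      Measurable (fun ω => ∑ i, ∑ j, if G.Adj i j then ε (i, j) ω * s i * t j else 0) := by
    intro s t
    apply Finset.measurable_sum
    intro i _
    apply Finset.measurable_sum
    intro j _
    by_cases h : G.Adj i j
    · simpa [h] using ((hmeas (i, j)).mul_const (s i)).mul_const (t j)
    · simpa [h] using measurable_const
  -- bounded above
  have hbdd : BddAbove SS := by
    refine ⟨((Fintype.card V : ℝ))^2 + 1, ?_⟩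
    rintro x ⟨s, t, hs, ht, rfl⟩
    set C : ℝ := ((Fintype.card V : ℝ))^2 + 1 with hCdef
    have hC : 0 < C := by positivity
    have hsb : ∀ v, |s v| ≤ 1 := by
      intro v
      have h1 : s v ^ 2 ≤ 1 := le_trans
        (Finset.single_le_sum (fun i _ => sq_nonneg (s i)) (Finset.mem_univ v)) hs
      rw [abs_le]; constructor <;> nlinarith
    have htb : ∀ v, |t v| ≤ 1 := by
      intro v
      have h1 : t v ^ 2 ≤ 1 := le_trans
        (Finset.single_le_sum (fun i _ => sq_nonneg (t i)) (Finset.mem_univ v)) ht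
      rw [abs_le]; constructor <;> nlinarith
    have hTb : ∀ ω, |∑ i, ∑ j, if G.Adj i j then ε (i, j) ω * s i * t j else 0| ≤ C := by
      intro ω
      calc |∑ i, ∑ j, if G.Adj i j then ε (i, j) ω * s i * t j else 0|
          ≤ ∑ i, |∑ j, if G.Adj i j then ε (i, j) ω * s i * t j else 0| :=
            Finset.abs_sum_le_sum_abs _ _
        _ ≤ ∑ _i : V, ((Fintype.card V : ℝ)) := by
            apply Finset.sum_le_sum
            intro i _
            calc |∑ j, if G.Adj i j then ε (i, j) ω * s i * t j else 0|
                ≤ ∑ j, |if G.Adj i j then ε (i, j) ω * s i * t j else 0| :=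
                  Finset.abs_sum_le_sum_abs _ _
              _ ≤ ∑ _j : V, (1:ℝ) := by
                  apply Finset.sum_le_sum
                  intro j _
                  by_cases h : G.Adj i j
                  · simp only [h, if_true, abs_mul]
                    calc |ε (i, j) ω| * |s i| * |t j| ≤ 1 * 1 * 1 := by
                          apply mul_le_mul (mul_le_mul (heps_abs _ _) (hsb i)
                            (abs_nonneg _) (by norm_num)) (htb j) (abs_nonneg _) (by norm_num)
                      _ = 1 := by norm_num
                  · simp [h]
              _ = (Fintype.card V : ℝ) := by simp
        _ = ((Fintype.card V : ℝ))^2 := by simp; ring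
        _ ≤ C := by simp [hCdef]
    have hTm := hTmeas s t
    have hint : Integrable
        (fun ω => |∑ i, ∑ j, if G.Adj i j then ε (i, j) ω * s i * t j else 0| ^ p) ℙ := by
      apply my_integrable_of_bdd
        ((Real.continuous_rpow_const hp0.le).measurable.comp hTm.abs) (C ^ p)
      intro ω
      show |(|∑ i, ∑ j, if G.Adj i j then ε (i, j) ω * s i * t j else 0| ^ p)| ≤ C ^ p
      rw [abs_of_nonneg (Real.rpow_nonneg (abs_nonneg _) p)]
      exact Real.rpow_le_rpow (abs_nonneg _) (hTb ω) hp0.le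
    have h1 : (∫ ω, |∑ i, ∑ j, if G.Adj i j then ε (i, j) ω * s i * t j else 0| ^ p) ≤ C ^ p := by
      calc (∫ ω, |∑ i, ∑ j, if G.Adj i j then ε (i, j) ω * s i * t j else 0| ^ p)
          ≤ ∫ _ω, C ^ p ∂ℙ := by
            apply integral_mono hint (integrable_const _)
            intro ω
            exact Real.rpow_le_rpow (abs_nonneg _) (hTb ω) hp0.le
        _ = C ^ p := by simp
    calc (∫ ω, |∑ i, ∑ j, if G.Adj i j then ε (i, j) ω * s i * t j else 0| ^ p) ^ (1/p)
        ≤ (C ^ p) ^ (1/p) := Real.rpow_le_rpow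
          (integral_nonneg fun ω => Real.rpow_nonneg (abs_nonneg _) p) h1 (by positivity)
      _ = C := by
          rw [← Real.rpow_mul hC.le, mul_one_div, div_self hp0', Real.rpow_one]
      _ = ((Fintype.card V : ℝ))^2 + 1 := rfl
  rw [hnorm]
  by_cases hm0 : m = 0
  · have : (1:ℝ)/4 * min p (m:ℝ) / D = 0 := by
      rw [hm0]; simp [min_eq_right hp0.le]
    rw [this]
    apply le_csSup hbdd
    refine ⟨0, 0, by simp, by simp, ?_⟩
    simp [Real.zero_rpow hp0', Real.zero_rpow (inv_ne_zero hp0')]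
  · 
    have hm1 : 1 ≤ m := Nat.one_le_iff_ne_zero.mpr hm0
    have hfl1 : 1 ≤ ⌊p⌋₊ := Nat.le_floor (by exact_mod_cast hp)
    set k : ℕ := min ⌊p⌋₊ m with hkdef
    have hk1 : 1 ≤ k := le_min hfl1 hm1
    have hkm : k ≤ m := min_le_right _ _
    have hkp : (k:ℝ) ≤ p := by
      have h1 : (k:ℝ) ≤ (⌊p⌋₊:ℝ) := by exact_mod_cast min_le_left ⌊p⌋₊ m
      exact h1.trans (Nat.floor_le hp0.le)
    have hk0 : (0:ℝ) < (k:ℝ) := by exact_mod_cast hk1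
    obtain ⟨E₁, hE₁sub, hE₁card⟩ := Finset.exists_subset_card_eq hkm
    have hIc : (0:ℝ) < (I.card:ℝ) := by exact_mod_cast hI.card_pos
    have hJc : (0:ℝ) < (J.card:ℝ) := by exact_mod_cast hJ.card_pos
    set s : V → ℝ := fun v => if v ∈ I then (Real.sqrt (I.card:ℝ))⁻¹ else 0 with hsdef
    set t : V → ℝ := fun v => if v ∈ J then (Real.sqrt (J.card:ℝ))⁻¹ else 0 with htdef
    have hs : ∑ v, s v ^ 2 ≤ 1 := by
      have hterm : ∀ v, s v ^ 2 = if v ∈ I then ((I.card:ℝ))⁻¹ else 0 := by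
        intro v; by_cases h : v ∈ I
        · simp only [hsdef, h, if_true]
          rw [← Real.sqrt_inv, Real.sq_sqrt (inv_nonneg.mpr hIc.le)]
        · simp [hsdef, h]
      calc ∑ v, s v ^ 2 = ∑ v, (if v ∈ I then ((I.card:ℝ))⁻¹ else 0) :=
            Finset.sum_congr rfl fun v _ => hterm v
        _ = ∑ _v ∈ I, ((I.card:ℝ))⁻¹ := by rw [Finset.sum_ite_mem, Finset.univ_inter]
        _ = 1 := by
            rw [Finset.sum_const, nsmul_eq_mul, mul_inv_cancel₀ (ne_of_gt hIc)]
        _ ≤ 1 := le_refl 1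
    have ht : ∑ v, t v ^ 2 ≤ 1 := by
      have hterm : ∀ v, t v ^ 2 = if v ∈ J then ((J.card:ℝ))⁻¹ else 0 := by
        intro v; by_cases h : v ∈ J
        · simp only [htdef, h, if_true]
          rw [← Real.sqrt_inv, Real.sq_sqrt (inv_nonneg.mpr hJc.le)]
        · simp [htdef, h]
      calc ∑ v, t v ^ 2 = ∑ v, (if v ∈ J then ((J.card:ℝ))⁻¹ else 0) :=
            Finset.sum_congr rfl fun v _ => hterm v
        _ = ∑ _v ∈ J, ((J.card:ℝ))⁻¹ := by rw [Finset.sum_ite_mem, Finset.univ_inter]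
        _ = 1 := by
            rw [Finset.sum_const, nsmul_eq_mul, mul_inv_cancel₀ (ne_of_gt hJc)]
        _ ≤ 1 := le_refl 1
    set S : Ω → ℝ := fun ω => ∑ e ∈ F, ε e ω with hSdef
    have hcc : (Real.sqrt (I.card:ℝ))⁻¹ * (Real.sqrt (J.card:ℝ))⁻¹ = D⁻¹ := by
      rw [hDdef, Real.sqrt_mul hIc.le, mul_inv]
    have hrw : ∀ ω, (∑ i, ∑ j, if G.Adj i j then ε (i, j) ω * s i * t j else 0)
        = D⁻¹ * S ω := by
      intro ω
      have h1 : ∀ i j, (if G.Adj i j then ε (i, j) ω * s i * t j else 0)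
          = (if (i, j) ∈ F then D⁻¹ * ε (i, j) ω else 0) := by
        intro i j
        by_cases ha : G.Adj i j <;> by_cases hi : i ∈ I <;> by_cases hj : j ∈ J <;>
          simp [hFdef, Finset.mem_filter, Finset.mem_product, ha, hi, hj, hsdef, htdef,
            ← hcc] <;> ring
      calc ∑ i, ∑ j, (if G.Adj i j then ε (i, j) ω * s i * t j else 0)
          = ∑ i, ∑ j, (if (i, j) ∈ F then D⁻¹ * ε (i, j) ω else 0) :=
            Finset.sum_congr rfl fun i _ => Finset.sum_congr rfl fun j _ => h1 i j
        _ = ∑ e ∈ Finset.univ ×ˢ Finset.univ, (if e ∈ F then D⁻¹ * ε e ω else 0) := by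
            rw [Finset.sum_product]
        _ = ∑ e ∈ F, D⁻¹ * ε e ω := by
            rw [Finset.univ_product_univ, Finset.sum_ite_mem, Finset.univ_inter]
        _ = D⁻¹ * S ω := by rw [hSdef, Finset.mul_sum]
    have hSmeas : Measurable S := Finset.measurable_sum _ fun e _ => hmeas e
    have hSb : ∀ ω, |S ω| ≤ (m:ℝ) := by
      intro ω
      calc |S ω| ≤ ∑ e ∈ F, |ε e ω| := Finset.abs_sum_le_sum_abs _ _
        _ ≤ ∑ _e ∈ F, (1:ℝ) := Finset.sum_le_sum fun e _ => heps_abs e ω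
        _ = (m:ℝ) := by simp [hmdef]
    set R : Ω → ℝ := fun ω => ∑ e ∈ F \ E₁, ε e ω with hRdef
    have hRmeas : Measurable R := Finset.measurable_sum _ fun e _ => hmeas e
    have hRb : ∀ ω, |R ω| ≤ (m:ℝ) := by
      intro ω
      calc |R ω| ≤ ∑ e ∈ F \ E₁, |ε e ω| := Finset.abs_sum_le_sum_abs _ _
        _ ≤ ∑ _e ∈ F \ E₁, (1:ℝ) := Finset.sum_le_sum fun e _ => heps_abs e ω
        _ = ((F \ E₁).card : ℝ) := by simp
        _ ≤ (m:ℝ) := by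
            have := Finset.card_le_card (Finset.sdiff_subset (s := F) (t := E₁))
            exact_mod_cast this
    set A : Set Ω := ⋂ e ∈ E₁, {ω | ε e ω = 1} with hAdef
    have hAmeas : MeasurableSet A := by
      apply MeasurableSet.biInter (E₁ : Finset (V × V)).countable_toSet
      intro q _; exact (hmeas q) (measurableSet_singleton 1)
    have hPA : ℙ A = (1/2 : ENNReal)^k := by
      have h2 := hind.meas_biInter (S := E₁) (s := fun q => {ω | ε q ω = 1})
        (fun q _ => ⟨{1}, measurableSet_singleton 1, rfl⟩)
      rw [hAdef, h2, Finset.prod_congr rfl fun q _ => hhalf q, Finset.prod_const, hE₁card]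
    have hPAr : (ℙ A).toReal = (1/2 : ℝ)^k := by
      rw [hPA]; simp [ENNReal.toReal_pow, ENNReal.toReal_div]
    set χ : Ω → ℝ := fun ω => if ∀ i : ↥E₁, ε i ω = 1 then 1 else 0 with hχdef
    have hAiff : ∀ ω, ω ∈ A ↔ ∀ i : ↥E₁, ε (i : V × V) ω = 1 := by
      intro ω; simp [hAdef, Set.mem_iInter, Subtype.forall]
    have hχ_ind : χ = Set.indicator A (fun _ => (1:ℝ)) := by
      funext ω
      rw [hχdef, Set.indicator_apply]
      exact if_congr (hAiff ω).symm rfl rfl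
    have hχmeas : Measurable χ := by
      rw [hχ_ind]; exact measurable_const.indicator hAmeas
    have hχ01 : ∀ ω, 0 ≤ χ ω ∧ χ ω ≤ 1 := by
      intro ω
      have hχval : χ ω = if ∀ i : ↥E₁, ε (i : V × V) ω = 1 then 1 else 0 := rfl
      rw [hχval]
      by_cases h : ∀ i : ↥E₁, ε (i : V × V) ω = 1
      · rw [if_pos h]; norm_num
      · rw [if_neg h]; norm_num
    have hdisj : Disjoint E₁ (F \ E₁) := Finset.disjoint_sdiff
    have hXY := hind.indepFun_finset E₁ (F \ E₁) hdisj hmeas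
    set g₁ : (↥E₁ → ℝ) → ℝ := fun v => if ∀ i, v i = 1 then 1 else 0 with hg₁def
    set g₂ : (↥(F \ E₁) → ℝ) → ℝ := fun v => |(k:ℝ) + ∑ i, v i| ^ p with hg₂def
    have hg₁m : Measurable g₁ := by
      have hset : MeasurableSet {v : ↥E₁ → ℝ | ∀ i, v i = 1} := by
        have he : {v : ↥E₁ → ℝ | ∀ i, v i = 1} = ⋂ i, (fun v : ↥E₁ → ℝ => v i) ⁻¹' {1} := by
          ext v; simp
        rw [he]
        exact MeasurableSet.iInter fun i => (measurable_pi_apply i) (measurableSet_singleton 1)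
      exact Measurable.ite hset measurable_const measurable_const
    have hg₂m : Measurable g₂ := by
      apply (Real.continuous_rpow_const hp0.le).measurable.comp
      exact (measurable_const.add (Finset.measurable_sum _ fun i _ => measurable_pi_apply i)).abs
    have hindep2 : IndepFun χ (fun ω => |(k:ℝ) + R ω| ^ p) ℙ := by
      have h := hXY.comp hg₁m hg₂m
      have e1 : g₁ ∘ (fun ω (i : ↥E₁) => ε i ω) = χ := rfl
      have e2 : g₂ ∘ (fun ω (i : ↥(F \ E₁)) => ε i ω) = fun ω => |(k:ℝ) + R ω| ^ p := by
        funext ω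
        simp only [Function.comp, hg₂def, hRdef]
        rw [Finset.sum_coe_sort (F \ E₁) (fun e => ε e ω)]
      rwa [e1, e2] at h
    have hkRmeas : Measurable (fun ω => |(k:ℝ) + R ω| ^ p) :=
      (Real.continuous_rpow_const hp0.le).measurable.comp (measurable_const.add hRmeas).abs
    have hmul : ∫ ω, χ ω * |(k:ℝ) + R ω| ^ p
        = (∫ ω, χ ω) * ∫ ω, |(k:ℝ) + R ω| ^ p :=
      hindep2.integral_mul_eq_mul_integral hχmeas.aestronglyMeasurable
        hkRmeas.aestronglyMeasurable
    have hχint : ∫ ω, χ ω = (1/2 : ℝ)^k := by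
      rw [hχ_ind, integral_indicator_const (1:ℝ) hAmeas, smul_eq_mul, mul_one, measureReal_def, hPAr]
    have hεint : ∀ q, Integrable (ε q) ℙ := fun q => my_integrable_of_bdd (hmeas q) 1 (heps_abs q)
    have hRint : Integrable R ℙ := my_integrable_of_bdd hRmeas (m:ℝ) hRb
    have hR0 : ∫ ω, R ω = 0 := by
      rw [hRdef]
      rw [integral_finset_sum _ fun e _ => hεint e]
      exact Finset.sum_eq_zero fun e _ => my_int_eps_zero (hmeas e) (hpm e) (hhalf e)
    have habs_int : Integrable (fun ω => |(k:ℝ) + R ω|) ℙ := ((integrable_const _).add hRint).abs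
    have hint_kRp : Integrable (fun ω => |(k:ℝ) + R ω| ^ p) ℙ := by
      apply my_integrable_of_bdd hkRmeas (((k:ℝ) + m) ^ p)
      intro ω
      rw [abs_of_nonneg (Real.rpow_nonneg (abs_nonneg _) p)]
      apply Real.rpow_le_rpow (abs_nonneg _) _ hp0.le
      calc |(k:ℝ) + R ω| ≤ |(k:ℝ)| + |R ω| := abs_add_le _ _
        _ ≤ (k:ℝ) + (m:ℝ) := by
            rw [abs_of_nonneg hk0.le]; exact add_le_add_right (hRb ω) _
    have h1 : (k:ℝ) ≤ ∫ ω, |(k:ℝ) + R ω| := by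
      have h2 : ∫ ω, ((k:ℝ) + R ω) = (k:ℝ) := by
        rw [integral_add (integrable_const _) hRint, integral_const, hR0]; simp
      calc (k:ℝ) = |∫ ω, ((k:ℝ) + R ω)| := by rw [h2, abs_of_nonneg hk0.le]
        _ ≤ ∫ ω, |(k:ℝ) + R ω| := by
            simpa [Real.norm_eq_abs] using
              norm_integral_le_integral_norm (μ := ℙ) (fun ω => (k:ℝ) + R ω)
    have hJensen : (∫ ω, |(k:ℝ) + R ω|) ^ p ≤ ∫ ω, |(k:ℝ) + R ω| ^ p := by
      have := (convexOn_rpow hp).map_integral_le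
        (ContinuousOn.rpow_const continuousOn_id fun x _ => Or.inr hp0.le) isClosed_Ici
        (Filter.Eventually.of_forall fun ω => Set.mem_Ici.mpr (abs_nonneg ((k:ℝ) + R ω)))
        habs_int (by exact hint_kRp)
      exact this
    have hQk : (k:ℝ)^p ≤ ∫ ω, |(k:ℝ) + R ω| ^ p :=
      le_trans (Real.rpow_le_rpow hk0.le h1 hp0.le) hJensen
    have hpoint : ∀ ω, χ ω * |(k:ℝ) + R ω| ^ p ≤ |S ω| ^ p := by
      intro ω
      by_cases h : ω ∈ A
      · have hSsplit : S ω = (k:ℝ) + R ω := by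
          have hsum1 : ∑ e ∈ E₁, ε e ω = (k:ℝ) := by
            have : ∀ e ∈ E₁, ε e ω = 1 := by
              intro e he
              exact (hAiff ω).mp h ⟨e, he⟩
            rw [Finset.sum_congr rfl this, Finset.sum_const, hE₁card]; simp
          have := Finset.sum_sdiff (f := fun e => ε e ω) hE₁sub
          rw [hSdef]
          simp only [← this, hsum1, hRdef]
          ring
        have hχ1 : χ ω = 1 := by rw [hχdef]; exact if_pos ((hAiff ω).mp h)
        rw [hχ1, one_mul, hSsplit]
      · have hχ0 : χ ω = 0 := by
          rw [hχdef]
          exact if_neg (fun hc => h ((hAiff ω).mpr hc))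
        rw [hχ0, zero_mul]
        exact Real.rpow_nonneg (abs_nonneg _) p
    have hSp_meas : Measurable (fun ω => |S ω| ^ p) :=
      (Real.continuous_rpow_const hp0.le).measurable.comp hSmeas.abs
    have hSp_int : Integrable (fun ω => |S ω| ^ p) ℙ := by
      apply my_integrable_of_bdd hSp_meas ((m:ℝ) ^ p)
      intro ω
      rw [abs_of_nonneg (Real.rpow_nonneg (abs_nonneg _) p)]
      exact Real.rpow_le_rpow (abs_nonneg _) (hSb ω) hp0.le
    have hprod_int : Integrable (fun ω => χ ω * |(k:ℝ) + R ω| ^ p) ℙ := by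
      apply my_integrable_of_bdd (hχmeas.mul hkRmeas) (((k:ℝ) + m) ^ p)
      intro ω
      show |χ ω * |(k:ℝ) + R ω| ^ p| ≤ ((k:ℝ) + m) ^ p
      rw [abs_mul, abs_of_nonneg (hχ01 ω).1, abs_of_nonneg (Real.rpow_nonneg (abs_nonneg _) p)]
      calc χ ω * |(k:ℝ) + R ω| ^ p ≤ 1 * |(k:ℝ) + R ω| ^ p :=
            mul_le_mul_of_nonneg_right (hχ01 ω).2 (Real.rpow_nonneg (abs_nonneg _) p)
        _ = |(k:ℝ) + R ω| ^ p := one_mul _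
        _ ≤ ((k:ℝ) + m) ^ p := by
            apply Real.rpow_le_rpow (abs_nonneg _) _ hp0.le
            calc |(k:ℝ) + R ω| ≤ |(k:ℝ)| + |R ω| := abs_add_le _ _
              _ ≤ (k:ℝ) + (m:ℝ) := by
                  rw [abs_of_nonneg hk0.le]; exact add_le_add_right (hRb ω) _
    have hmain : (1/2:ℝ)^k * (k:ℝ)^p ≤ ∫ ω, |S ω| ^ p := by
      calc (1/2:ℝ)^k * (k:ℝ)^p ≤ (1/2:ℝ)^k * ∫ ω, |(k:ℝ) + R ω| ^ p :=
            mul_le_mul_of_nonneg_left hQk (by positivity)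
        _ = ∫ ω, χ ω * |(k:ℝ) + R ω| ^ p := by rw [hmul, hχint]
        _ ≤ ∫ ω, |S ω| ^ p := integral_mono hprod_int hSp_int hpoint
    have hx_mem : D⁻¹ * (∫ ω, |S ω| ^ p) ^ (1/p) ∈ SS := by
      refine ⟨s, t, hs, ht, ?_⟩
      have heqf : (fun ω => |∑ i, ∑ j, if G.Adj i j then ε (i, j) ω * s i * t j else 0| ^ p)
          = fun ω => (D⁻¹)^p * |S ω| ^ p := by
        funext ω
        rw [hrw ω, abs_mul, abs_of_nonneg (inv_nonneg.mpr hD.le),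
          Real.mul_rpow (inv_nonneg.mpr hD.le) (abs_nonneg _)]
      rw [heqf, integral_const_mul,
        Real.mul_rpow (Real.rpow_nonneg (inv_nonneg.mpr hD.le) p)
          (integral_nonneg fun ω => Real.rpow_nonneg (abs_nonneg _) p),
        ← Real.rpow_mul (inv_nonneg.mpr hD.le), mul_one_div, div_self hp0', Real.rpow_one]
    have hfinal : (1:ℝ)/4 * min p (m:ℝ) / D ≤ D⁻¹ * (∫ ω, |S ω| ^ p) ^ (1/p) := by
      have hA0 : ((1/2:ℝ)^k * (k:ℝ)^p) ^ (1/p) ≤ (∫ ω, |S ω| ^ p) ^ (1/p) :=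
        Real.rpow_le_rpow
          (mul_nonneg (pow_nonneg (by norm_num) k) (Real.rpow_nonneg (Nat.cast_nonneg k) p))
          hmain (one_div_nonneg.mpr hp0.le)
      have heq2 : ((1/2:ℝ)^k * (k:ℝ)^p) ^ (1/p) = ((1/2:ℝ) ^ ((k:ℝ)/p)) * (k:ℝ) := by
        rw [Real.mul_rpow (pow_nonneg (by norm_num) k) (Real.rpow_nonneg (Nat.cast_nonneg k) p),
          ← Real.rpow_natCast (1/2:ℝ) k, ← Real.rpow_mul (by norm_num : (0:ℝ) ≤ 1/2),
          mul_one_div, ← Real.rpow_mul (Nat.cast_nonneg k), mul_one_div, div_self hp0',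
          Real.rpow_one]
      have hhalfpow : (1/2:ℝ) ≤ (1/2:ℝ) ^ ((k:ℝ)/p) := by
        have hle1 : (k:ℝ)/p ≤ 1 := (div_le_one hp0).mpr hkp
        calc (1/2:ℝ) = (1/2:ℝ)^(1:ℝ) := (Real.rpow_one _).symm
          _ ≤ (1/2:ℝ) ^ ((k:ℝ)/p) :=
            Real.rpow_le_rpow_of_exponent_ge (by norm_num) (by norm_num) hle1
      have hkmin : min p (m:ℝ) ≤ 2 * (k:ℝ) := by
        have hcast : (k:ℝ) = min ((⌊p⌋₊:ℕ):ℝ) ((m:ℕ):ℝ) := by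
          rw [hkdef]; push_cast; rfl
        rcases le_total ((⌊p⌋₊:ℕ):ℝ) ((m:ℕ):ℝ) with h | h
        · have hmin : min ((⌊p⌋₊:ℕ):ℝ) ((m:ℕ):ℝ) = ((⌊p⌋₊:ℕ):ℝ) := min_eq_left h
          have hp2 : p ≤ 2 * ((⌊p⌋₊:ℕ):ℝ) := by
            have h3 := Nat.lt_floor_add_one p
            have h4 : (1:ℝ) ≤ ((⌊p⌋₊:ℕ):ℝ) := by exact_mod_cast hfl1
            push_cast at h3 ⊢
            linarith
          calc min p (m:ℝ) ≤ p := min_le_left _ _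
            _ ≤ 2 * ((⌊p⌋₊:ℕ):ℝ) := hp2
            _ = 2 * (k:ℝ) := by rw [hcast, hmin]
        · have hmin : min ((⌊p⌋₊:ℕ):ℝ) ((m:ℕ):ℝ) = ((m:ℕ):ℝ) := min_eq_right h
          calc min p (m:ℝ) ≤ (m:ℝ) := min_le_right _ _
            _ ≤ 2 * (m:ℝ) := by linarith [hm1, (by exact_mod_cast hm1 : (1:ℝ) ≤ (m:ℝ))]
            _ = 2 * (k:ℝ) := by rw [hcast, hmin]
      calc (1:ℝ)/4 * min p (m:ℝ) / D = D⁻¹ * ((1/2) * (min p (m:ℝ) / 2)) := by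
            rw [div_eq_mul_inv]; ring
        _ ≤ D⁻¹ * ((1/2:ℝ) ^ ((k:ℝ)/p) * (k:ℝ)) := by
            apply mul_le_mul_of_nonneg_left _ (inv_nonneg.mpr hD.le)
            exact mul_le_mul hhalfpow (by linarith)
              (div_nonneg (le_min hp0.le (Nat.cast_nonneg m)) (by norm_num))
              (Real.rpow_nonneg (by norm_num) _)
        _ = D⁻¹ * ((1/2:ℝ)^k * (k:ℝ)^p) ^ (1/p) := by rw [heq2]
        _ ≤ D⁻¹ * (∫ ω, |S ω| ^ p) ^ (1/p) :=
            mul_le_mul_of_nonneg_left hA0 (inv_nonneg.mpr hD.le)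
    exact le_trans hfinal (le_csSup hbdd hx_mem)
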